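/- Let X be a countable alphabet, p a probability distribution on X, and X_1,...,X_n i.i.d. samples from p with empirical estimator p̂_u = #{i ≤ n : X_i = u}/n. Let m be a positive even integer, d = m/2, and let c_{k,m,n} (1 ≤ k ≤ d) be real coefficients satisfying the binomial central-moment identity. Then for every δ ∈ (0,1), with probability at least 1 − δ, sup_{u∈X} |p_u − p̂_u| ≤ (1/n) · δ^{−1/m} · ( Σ_{k=1}^{d} c_{k,m,n} Σ_{u∈X} p_u^k (1−p_u)^k )^{1/m}. -/

import Mathlib

open MeasureTheory ProbabilityTheory Finset

/-- The empirical (maximum likelihood) estimator `p̂_u = #{i ≤ n : X_i = u} / n`. -/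
noncomputable def emp {𝒳 : Type*} [DecidableEq 𝒳] {Ω : Type*} {n : ℕ}
    (X : Fin n → Ω → 𝒳) (ω : Ω) (u : 𝒳) : ℝ :=
  ((Finset.univ.filter (fun i => X i ω = u)).card : ℝ) / n

/-- The coefficients `c k` (for `1 ≤ k ≤ d`) satisfy the binomial central-moment identity:
for every `θ ∈ [0,1]` and `Y ~ Bin(n, θ)`,
`E[(Y - nθ)^m] = ∑_{k=1}^d c k (θ(1-θ))^k`. -/
def MomentIdentity (n m d : ℕ) (c : ℕ → ℝ) : Prop :=
  ∀ θ : ℝ, θ ∈ Set.Icc (0:ℝ) 1 →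
    ∑ y ∈ Finset.range (n+1),
        (n.choose y : ℝ) * θ^y * (1-θ)^(n-y) * ((y:ℝ) - n*θ)^m
      = ∑ k ∈ Finset.Icc 1 d, c k * (θ*(1-θ))^k

lemma count_dist {𝒳 : Type*} [DecidableEq 𝒳] [MeasurableSpace 𝒳] [MeasurableSingletonClass 𝒳]
    {Ω : Type*} [MeasureSpace Ω] [IsProbabilityMeasure (ℙ : Measure Ω)]
    {n : ℕ} (X : Fin n → Ω → 𝒳) (hmeas : ∀ i, Measurable (X i))
    (hindep : iIndepFun X ℙ)
    (u : 𝒳) (q : ℝ) (hq0 : 0 ≤ q) (hq1 : q ≤ 1)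
    (hdist : ∀ i, ℙ {ω | X i ω = u} = ENNReal.ofReal q)
    (y : ℕ) :
    ℙ {ω | (Finset.univ.filter (fun i => X i ω = u)).card = y}
      = ENNReal.ofReal ((n.choose y : ℝ) * q^y * (1-q)^(n-y)) := by
  have hA : ∀ i, MeasurableSet {ω | X i ω = u} := by
    intro i
    have : {ω | X i ω = u} = X i ⁻¹' {u} := by ext ω; simp
    rw [this]; exact hmeas i (measurableSet_singleton u)
  have hcompl : ∀ i, ℙ ({ω | X i ω = u}ᶜ) = ENNReal.ofReal (1-q) := by
    intro i
    rw [prob_compl_eq_one_sub (hA i), hdist i, ENNReal.ofReal_sub 1 hq0, ENNReal.ofReal_one]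
  -- the event as a finite union
  have hev : {ω | (Finset.univ.filter (fun i => X i ω = u)).card = y}
      = ⋃ S ∈ Finset.powersetCard y (Finset.univ : Finset (Fin n)),
          {ω | Finset.univ.filter (fun i => X i ω = u) = S} := by
    ext ω
    simp only [Set.mem_setOf_eq, Set.mem_iUnion, Finset.mem_powersetCard]
    constructor
    · intro h
      exact ⟨Finset.univ.filter (fun i => X i ω = u), ⟨Finset.filter_subset _ _, h⟩, rfl⟩
    · rintro ⟨S, ⟨-, hc⟩, rfl⟩; exact hc
  -- each piece as an intersection
  have hpiece : ∀ S : Finset (Fin n),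
      {ω | Finset.univ.filter (fun i => X i ω = u) = S}
        = ⋂ i, (if i ∈ S then {ω | X i ω = u} else {ω | X i ω = u}ᶜ) := by
    intro S
    ext ω
    simp only [Set.mem_setOf_eq, Set.mem_iInter, Finset.ext_iff, Finset.mem_filter,
      Finset.mem_univ, true_and]
    constructor
    · intro h i
      by_cases hi : i ∈ S
      · simp [hi, (h i).mpr hi]
      · simp only [hi, if_false, Set.mem_compl_iff, Set.mem_setOf_eq]
        intro hx; exact hi ((h i).mp hx)
    · intro h i
      by_cases hi : i ∈ S
      · have := h i; simp [hi] at this; simp [hi, this]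
      · have := h i; simp [hi] at this; simp [hi, this]
  have hpiece_meas : ∀ S : Finset (Fin n),
      MeasurableSet {ω | Finset.univ.filter (fun i => X i ω = u) = S} := by
    intro S
    rw [hpiece S]
    exact MeasurableSet.iInter fun i => by
      by_cases hi : i ∈ S
      · simp only [hi, if_true]; exact hA i
      · simp only [hi, if_false]; exact (hA i).compl
  have hprob : ∀ S ∈ Finset.powersetCard y (Finset.univ : Finset (Fin n)),
      ℙ {ω | Finset.univ.filter (fun i => X i ω = u) = S}
        = ENNReal.ofReal (q^y * (1-q)^(n-y)) := by
    intro S hS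
    rw [Finset.mem_powersetCard] at hS
    rw [hpiece S]
    rw [hindep.meas_iInter (fun i => ?_)]
    · have : ∀ i : Fin n, ℙ (if i ∈ S then {ω | X i ω = u} else {ω | X i ω = u}ᶜ)
          = if i ∈ S then ENNReal.ofReal q else ENNReal.ofReal (1-q) := by
        intro i; by_cases hi : i ∈ S <;> simp [hi, hdist i, hcompl i]
      simp_rw [this]
      rw [Finset.prod_ite, Finset.prod_const, Finset.prod_const, Finset.filter_univ_mem,
        Finset.filter_not, Finset.filter_univ_mem, hS.2]
      have hcard : (Finset.univ \ S).card = n - y := by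
        rw [Finset.card_sdiff_of_subset (Finset.subset_univ S), Finset.card_univ, Fintype.card_fin, hS.2]
      rw [hcard, ← ENNReal.ofReal_pow hq0, ← ENNReal.ofReal_pow (by linarith : (0:ℝ) ≤ 1 - q),
        ← ENNReal.ofReal_mul (by positivity)]
    · by_cases hi : i ∈ S
      · simp only [hi, if_true]
        exact ⟨{u}, measurableSet_singleton u, by ext ω; simp⟩
      · simp only [hi, if_false]
        exact ⟨{u}ᶜ, (measurableSet_singleton u).compl, by ext ω; simp⟩
  rw [hev, measure_biUnion_finset ?disj (fun S _ => hpiece_meas S)]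
  · rw [Finset.sum_congr rfl hprob, Finset.sum_const, Finset.card_powersetCard,
      Finset.card_univ, Fintype.card_fin, nsmul_eq_mul]
    rw [← ENNReal.ofReal_natCast, ← ENNReal.ofReal_mul (by positivity), mul_assoc]
  case disj =>
    intro S hS T hT hST
    simp only [Function.onFun]
    apply Set.disjoint_left.mpr
    intro ω h1 h2
    exact hST (h1.symm.trans h2)

/-- The empirical (maximum likelihood) estimator `p̂_u = #{i ≤ n : X_i = u} / n`. -/

lemma moment_eq {𝒳 : Type*} [DecidableEq 𝒳] [MeasurableSpace 𝒳] [MeasurableSingletonClass 𝒳]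
    {Ω : Type*} [MeasureSpace Ω] [IsProbabilityMeasure (ℙ : Measure Ω)]
    {n : ℕ} (hn : 1 ≤ n) (X : Fin n → Ω → 𝒳) (hmeas : ∀ i, Measurable (X i))
    (u : 𝒳) (q : ℝ) (hq0 : 0 ≤ q) (hq1 : q ≤ 1)
    (hcount : ∀ y : ℕ, ℙ {ω | (Finset.univ.filter (fun i => X i ω = u)).card = y}
      = ENNReal.ofReal ((n.choose y : ℝ) * q^y * (1-q)^(n-y)))
    (m : ℕ) (hm : Even m) (M : ℝ)
    (hM : ∑ y ∈ Finset.range (n+1),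
        (n.choose y : ℝ) * q^y * (1-q)^(n-y) * ((y:ℝ) - n*q)^m = M) :
    (∫⁻ ω, ENNReal.ofReal (|q - emp X ω u|^m) ∂ℙ) = ENNReal.ofReal (M / n^m)
      ∧ 0 ≤ M := by
  have hn0 : (0:ℝ) < n := by exact_mod_cast hn
  have hA : ∀ i, MeasurableSet {ω | X i ω = u} := by
    intro i
    have : {ω | X i ω = u} = X i ⁻¹' {u} := by ext ω; simp
    rw [this]; exact hmeas i (measurableSet_singleton u)
  set N : Ω → ℕ := fun ω => (Finset.univ.filter (fun i => X i ω = u)).card with hN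
  have hNmeas : Measurable N := by
    have : N = fun ω => ∑ i : Fin n, if X i ω = u then 1 else 0 := by
      ext ω; simp only [hN]; rw [Finset.card_filter]
    rw [this]
    exact Finset.measurable_sum _ (fun i _ => Measurable.ite (hA i) measurable_const measurable_const)
  have hsetmeas : ∀ y : ℕ, MeasurableSet {ω | N ω = y} :=
    fun y => hNmeas (measurableSet_singleton y)
  -- pointwise decomposition
  have hpt : (fun ω => ENNReal.ofReal (|q - emp X ω u|^m))
      = fun ω => ∑ y ∈ Finset.range (n+1),
          Set.indicator {ω' | N ω' = y} (fun _ => ENNReal.ofReal (|q - (y:ℝ)/n|^m)) ω := by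
    ext ω
    have hmem : N ω ∈ Finset.range (n+1) := by
      rw [Finset.mem_range, Nat.lt_succ_iff, hN]
      simpa using Finset.card_filter_le Finset.univ (fun i => X i ω = u)
    rw [Finset.sum_eq_single_of_mem (N ω) hmem]
    · rw [Set.indicator_of_mem (by exact rfl : ω ∈ {ω' | N ω' = N ω})]
      rfl
    · intro y _ hy
      rw [Set.indicator_of_notMem]
      intro h
      exact hy (h.symm)
  rw [hpt, lintegral_finset_sum _ (fun y _ =>
    (measurable_const.indicator (hsetmeas y)))]
  simp_rw [lintegral_indicator_const (hsetmeas _)]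
  have key : ∀ y : ℕ, ENNReal.ofReal (|q - (y:ℝ)/n|^m) * ℙ {ω | N ω = y}
      = ENNReal.ofReal ((n.choose y : ℝ) * q^y * (1-q)^(n-y) * ((y:ℝ) - n*q)^m / n^m) := by
    intro y
    rw [hcount y, ← ENNReal.ofReal_mul (by positivity)]
    congr 1
    have habs : |q - (y:ℝ)/n|^m = ((y:ℝ) - n*q)^m / n^m := by
      rw [hm.pow_abs]
      rw [show q - (y:ℝ)/n = -(((y:ℝ) - n*q)/n) by field_simp; ring, hm.neg_pow, div_pow]
    rw [habs]; ring
  simp_rw [key]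
  have hnonneg : ∀ y ∈ Finset.range (n+1),
      0 ≤ (n.choose y : ℝ) * q^y * (1-q)^(n-y) * ((y:ℝ) - n*q)^m / n^m := by
    intro y _
    have h1 : (0:ℝ) ≤ (n.choose y : ℝ) * q^y * (1-q)^(n-y) :=
      mul_nonneg (mul_nonneg (Nat.cast_nonneg _) (pow_nonneg hq0 _)) (pow_nonneg (by linarith) _)
    have h2 : (0:ℝ) ≤ ((y:ℝ) - n*q)^m := hm.pow_nonneg _
    exact div_nonneg (mul_nonneg h1 h2) (by positivity)
  rw [← ENNReal.ofReal_sum_of_nonneg hnonneg]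
  constructor
  · congr 1
    rw [← Finset.sum_div, hM]
  · have := Finset.sum_nonneg hnonneg
    rw [← hM]
    apply Finset.sum_nonneg
    intro y hy
    have h1 : (0:ℝ) ≤ (n.choose y : ℝ) * q^y * (1-q)^(n-y) :=
      mul_nonneg (mul_nonneg (Nat.cast_nonneg _) (pow_nonneg hq0 _)) (pow_nonneg (by linarith) _)
    have h2 : (0:ℝ) ≤ ((y:ℝ) - n*q)^m := hm.pow_nonneg _
    exact mul_nonneg h1 h2

/-- **Theorem 2 (data-independent bound).** With probability at least `1 - δ`,
`‖p - p̂‖_∞ ≤ (1/n) δ^{-1/m} (∑_{k=1}^{m/2} c_{k,m,n} ∑_u p_u^k (1-p_u)^k)^{1/m}`. -/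
theorem subset_selection_data_independent_bound
    {𝒳 : Type*} [Countable 𝒳] [DecidableEq 𝒳]
    [MeasurableSpace 𝒳] [MeasurableSingletonClass 𝒳]
    {Ω : Type*} [MeasureSpace Ω] [IsProbabilityMeasure (ℙ : Measure Ω)]
    (p : 𝒳 → ℝ) (hp0 : ∀ u, 0 ≤ p u) (hp1 : ∑' u, p u = 1)
    (n : ℕ) (hn : 1 ≤ n)
    (X : Fin n → Ω → 𝒳) (hmeas : ∀ i, Measurable (X i))
    (hindep : iIndepFun X ℙ)
    (hdist : ∀ i u, (ℙ {ω | X i ω = u}).toReal = p u)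
    (m : ℕ) (hm : Even m) (hm0 : 0 < m) (d : ℕ) (hd : d = m / 2)
    (c : ℕ → ℝ) (hc : MomentIdentity n m d c)
    (δ : ℝ) (hδ : δ ∈ Set.Ioo (0:ℝ) 1) :
    ℙ {ω | ⨆ u, |p u - emp X ω u| ≤
        (1/(n:ℝ)) * δ ^ (-(1:ℝ)/(m:ℝ)) *
          (∑ k ∈ Finset.Icc 1 d, c k * ∑' u, (p u)^k * (1 - p u)^k) ^ ((1:ℝ)/(m:ℝ))}
      ≥ ENNReal.ofReal (1 - δ) := by
  obtain ⟨hδ0, hδ1⟩ := hδ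
  have hn0 : (0:ℝ) < n := by exact_mod_cast hn
  have hm0' : (0:ℝ) < m := by exact_mod_cast hm0
  -- basic facts about p
  have hsumm : Summable p := by
    by_contra h
    rw [tsum_eq_zero_of_not_summable h] at hp1
    norm_num at hp1
  have hp1' : ∀ u, p u ≤ 1 := by
    intro u
    rw [← hp1]
    exact Summable.le_tsum hsumm u (fun j _ => hp0 j)
  have hX : Nonempty 𝒳 := by
    rcases isEmpty_or_nonempty 𝒳 with h | h
    · rw [tsum_empty] at hp1; norm_num at hp1
    · exact h
  -- distribution facts
  have hdist' : ∀ i u, ℙ {ω | X i ω = u} = ENNReal.ofReal (p u) := by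
    intro i u
    rw [← hdist i u, ENNReal.ofReal_toReal (measure_ne_top _ _)]
  -- per-symbol moments
  set g : 𝒳 → ℝ := fun u => ∑ k ∈ Finset.Icc 1 d, c k * (p u * (1 - p u))^k with hg
  have hmom : ∀ u : 𝒳,
      (∫⁻ ω, ENNReal.ofReal (|p u - emp X ω u|^m) ∂ℙ) = ENNReal.ofReal (g u / n^m)
        ∧ 0 ≤ g u := by
    intro u
    have h := moment_eq hn X hmeas u (p u) (hp0 u) (hp1' u)
      (count_dist X hmeas hindep u (p u) (hp0 u) (hp1' u) (fun i => hdist' i u))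
      m hm (g u) (hc (p u) ⟨hp0 u, hp1' u⟩)
    refine ⟨h.1, ?_⟩
    have := h.2
    nlinarith [pow_pos hn0 m]
  have hg0 : ∀ u, 0 ≤ g u := fun u => (hmom u).2
  -- summability
  have hsgk : ∀ k : ℕ, k ≠ 0 → Summable (fun u => (p u * (1 - p u))^k) := by
    intro k hk
    apply Summable.of_nonneg_of_le (fun u => ?_) (fun u => ?_) hsumm
    · have h2 : (0:ℝ) ≤ p u * (1 - p u) := by nlinarith [hp0 u, hp1' u]
      exact pow_nonneg h2 k
    · have h1 : p u * (1 - p u) ≤ 1 := by nlinarith [hp0 u, hp1' u]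
      have h2 : (0:ℝ) ≤ p u * (1 - p u) := by nlinarith [hp0 u, hp1' u]
      calc (p u * (1 - p u))^k ≤ p u * (1 - p u) := pow_le_of_le_one h2 h1 hk
        _ ≤ p u := by nlinarith [hp0 u, hp1' u]
  have hgsumm : Summable g := by
    apply summable_sum
    intro k hk
    rw [Finset.mem_Icc] at hk
    exact (hsgk k (by omega)).mul_left _
  -- T
  set T : ℝ := ∑ k ∈ Finset.Icc 1 d, c k * ∑' u, (p u)^k * (1 - p u)^k with hT
  have hTg : ∑' u, g u = T := by
    rw [hg, Summable.tsum_finsetSum (fun k hk => ?_)]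
    · apply Finset.sum_congr rfl
      intro k hk
      rw [tsum_mul_left]
      congr 1
      exact tsum_congr fun u => by rw [mul_pow]
    · rw [Finset.mem_Icc] at hk
      exact (hsgk k (by omega)).mul_left _
  have hT0 : 0 ≤ T := by rw [← hTg]; exact tsum_nonneg hg0
  set B : ℝ := (1/(n:ℝ)) * δ ^ (-(1:ℝ)/(m:ℝ)) * T ^ ((1:ℝ)/(m:ℝ)) with hB
  -- measurability of emp
  have hemp : ∀ u, Measurable (fun ω => emp X ω u) := by
    intro u
    have hA : ∀ i, MeasurableSet {ω | X i ω = u} := fun i => by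
      have : {ω | X i ω = u} = X i ⁻¹' {u} := by ext ω; simp
      rw [this]; exact hmeas i (measurableSet_singleton u)
    have heq : (fun ω => emp X ω u)
        = fun ω => (∑ i : Fin n, if X i ω = u then (1:ℝ) else 0)/n := by
      ext ω
      simp only [emp]
      rw [Finset.card_filter]
      push_cast
      rfl
    rw [heq]
    exact (Finset.measurable_sum _ fun i _ =>
      Measurable.ite (hA i) measurable_const measurable_const).div_const _
  set S : Ω → ℝ := fun ω => ⨆ u, |p u - emp X ω u| with hSdef
  have hSmeas : Measurable S :=
    Measurable.iSup (fun u => (measurable_const.sub (hemp u)).abs)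
  have habs_le : ∀ ω u, |p u - emp X ω u| ≤ 1 := by
    intro ω u
    have h1 : 0 ≤ emp X ω u := by
      simp only [emp]; positivity
    have h2 : emp X ω u ≤ 1 := by
      simp only [emp]
      rw [div_le_one hn0]
      exact_mod_cast (by simpa using Finset.card_filter_le Finset.univ (fun i => X i ω = u))
    rw [abs_le]; constructor <;> nlinarith [hp0 u, hp1' u]
  have hbdd : ∀ ω, BddAbove (Set.range fun u => |p u - emp X ω u|) :=
    fun ω => ⟨1, by rintro x ⟨u, rfl⟩; exact habs_le ω u⟩
  have hS0 : ∀ ω, 0 ≤ S ω := fun ω => Real.iSup_nonneg (fun u => abs_nonneg _)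
  -- pointwise bound
  have hpt : ∀ ω, ENNReal.ofReal (S ω ^ m) ≤ ∑' u, ENNReal.ofReal (|p u - emp X ω u|^m) := by
    intro ω
    have hmono : Monotone (fun x : ℝ => ENNReal.ofReal x ^ m) :=
      fun a b hab => pow_le_pow_left' (ENNReal.ofReal_le_ofReal hab) m
    have hcont : ContinuousAt (fun x : ℝ => ENNReal.ofReal x ^ m) (S ω) :=
      ((ENNReal.continuous_pow m).comp ENNReal.continuous_ofReal).continuousAt
    have hmap := hmono.map_ciSup_of_continuousAt hcont (hbdd ω)
    calc ENNReal.ofReal (S ω ^ m) = ENNReal.ofReal (S ω) ^ m :=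
          ENNReal.ofReal_pow (hS0 ω) m
      _ = ⨆ u, ENNReal.ofReal (|p u - emp X ω u|) ^ m := hmap
      _ ≤ ∑' u, ENNReal.ofReal (|p u - emp X ω u|^m) := by
          apply iSup_le
          intro u
          rw [← ENNReal.ofReal_pow (abs_nonneg _)]
          exact ENNReal.le_tsum u
  have hL : ∫⁻ ω, ENNReal.ofReal (S ω ^ m) ∂ℙ ≤ ENNReal.ofReal (T / n^m) := by
    calc ∫⁻ ω, ENNReal.ofReal (S ω ^ m) ∂ℙ
        ≤ ∫⁻ ω, ∑' u, ENNReal.ofReal (|p u - emp X ω u|^m) ∂ℙ := lintegral_mono hpt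
      _ = ∑' u, ∫⁻ ω, ENNReal.ofReal (|p u - emp X ω u|^m) ∂ℙ :=
          lintegral_tsum (fun u =>
            (((measurable_const.sub (hemp u)).abs.pow_const m).ennreal_ofReal).aemeasurable)
      _ = ∑' u, ENNReal.ofReal (g u / n^m) := tsum_congr fun u => (hmom u).1
      _ = ENNReal.ofReal (∑' u, g u / n^m) :=
          (ENNReal.ofReal_tsum_of_nonneg (fun u => div_nonneg (hg0 u) (by positivity))
            (hgsumm.div_const _)).symm
      _ = ENNReal.ofReal (T / n^m) := by rw [tsum_div_const, hTg]
  -- algebra on B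
  have hBm : B ^ m = δ⁻¹ * (T / n^m) := by
    rw [hB, mul_pow, mul_pow]
    rw [← Real.rpow_natCast (δ ^ (-(1:ℝ)/(m:ℝ))) m, ← Real.rpow_natCast (T ^ ((1:ℝ)/(m:ℝ))) m,
      ← Real.rpow_mul (le_of_lt hδ0), ← Real.rpow_mul hT0]
    rw [show (-(1:ℝ)/(m:ℝ)) * m = -1 by field_simp, show ((1:ℝ)/(m:ℝ)) * m = 1 by field_simp]
    rw [Real.rpow_neg_one, Real.rpow_one, div_pow, one_pow]
    ring
  have hB0 : 0 ≤ B := by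
    rw [hB]
    have h1 := Real.rpow_nonneg hT0 ((1:ℝ)/(m:ℝ))
    have h2 := Real.rpow_nonneg (le_of_lt hδ0) (-(1:ℝ)/(m:ℝ))
    have h3 : (0:ℝ) ≤ 1/(n:ℝ) := by positivity
    exact mul_nonneg (mul_nonneg h3 h2) h1
  have hEmeas : MeasurableSet {ω | S ω ≤ B} := measurableSet_le hSmeas measurable_const
  have hfinal : ENNReal.ofReal (1-δ) ≤ ℙ {ω | S ω ≤ B} := by
    suffices hcompl : ℙ ({ω | S ω ≤ B}ᶜ) ≤ ENNReal.ofReal δ by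
      have h2 : ℙ {ω | S ω ≤ B} = 1 - ℙ ({ω | S ω ≤ B}ᶜ) := by
        rw [← prob_compl_eq_one_sub hEmeas.compl, compl_compl]
      calc ENNReal.ofReal (1 - δ) = 1 - ENNReal.ofReal δ := by
            rw [ENNReal.ofReal_sub 1 (le_of_lt hδ0), ENNReal.ofReal_one]
        _ ≤ 1 - ℙ ({ω | S ω ≤ B}ᶜ) := tsub_le_tsub_left hcompl 1
        _ = ℙ {ω | S ω ≤ B} := h2.symm
    have hsub : {ω | S ω ≤ B}ᶜ ⊆ {ω | ENNReal.ofReal (B^m) ≤ ENNReal.ofReal (S ω ^ m)} := by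
      intro ω hω
      simp only [Set.mem_compl_iff, Set.mem_setOf_eq, not_le] at hω ⊢
      exact ENNReal.ofReal_le_ofReal (pow_le_pow_left₀ hB0 (le_of_lt hω) m)
    rcases eq_or_lt_of_le hT0 with hTz | hTpos
    · -- T = 0 : S = 0 a.e.
      have hBz : B = 0 := by
        rw [hB, ← hTz, Real.zero_rpow (by positivity : (1:ℝ)/(m:ℝ) ≠ 0), mul_zero]
      have hL0 : ∫⁻ ω, ENNReal.ofReal (S ω ^ m) ∂ℙ = 0 := by
        refine le_antisymm (le_trans hL ?_) zero_le
        rw [← hTz]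
        simp
      rw [lintegral_eq_zero_iff ((hSmeas.pow_const m).ennreal_ofReal)] at hL0
      have hae : ∀ᵐ ω ∂ℙ, S ω ≤ B := by
        filter_upwards [hL0] with ω hω
        simp only [Pi.zero_apply, ENNReal.ofReal_eq_zero] at hω
        have h1 : S ω ^ m = 0 := le_antisymm hω (pow_nonneg (hS0 ω) m)
        have h2 : S ω = 0 := pow_eq_zero_iff (by omega : m ≠ 0) |>.mp h1
        rw [h2, hBz]
      have : ℙ ({ω | S ω ≤ B}ᶜ) = 0 := by
        rw [ae_iff] at hae
        simpa [Set.compl_setOf] using hae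
      rw [this]
      exact zero_le
    · -- T > 0 : Markov
      have hBm0 : 0 < B ^ m := by
        rw [hBm]
        exact mul_pos (inv_pos.mpr hδ0) (div_pos hTpos (pow_pos hn0 m))
      have hε0 : ENNReal.ofReal (B^m) ≠ 0 := by
        simp only [ne_eq, ENNReal.ofReal_eq_zero, not_le]
        exact hBm0
      have hmarkov := mul_meas_ge_le_lintegral₀ (μ := ℙ)
        (((hSmeas.pow_const m).ennreal_ofReal).aemeasurable) (ENNReal.ofReal (B^m))
      have h3 : ENNReal.ofReal (B^m) * ℙ {ω | ENNReal.ofReal (B^m) ≤ ENNReal.ofReal (S ω ^ m)}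
          ≤ ENNReal.ofReal (B^m) * ENNReal.ofReal δ := by
        refine le_trans hmarkov (le_trans hL ?_)
        have hTδ : T / n^m = δ * B^m := by
          rw [hBm]
          field_simp
        rw [hTδ, ENNReal.ofReal_mul (le_of_lt hδ0), mul_comm]
      have h4 := (ENNReal.mul_le_mul_iff_right hε0 ENNReal.ofReal_ne_top).mp h3
      exact le_trans (measure_mono hsub) h4
  exact hfinal
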